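/- For all natural numbers n ≥ 1 and k with 1 ≤ k ≤ n, the sum over all k-tuples (n_1,...,n_k) of positive integers with n_1 + ... + n_k = n of the quantity (n! / (n_1! ⋯ n_k! · k!)) · ∏_{ℓ=1}^k (n_ℓ/n)^{n_ℓ - 1} equals the binomial coefficient C(n-1, k-1). -/

import Mathlib

open Finset
section PolyPart
open Polynomial

noncomputable def w (x : ℚ) (k : ℕ) : ℚ := if k = 0 then 1 else x * (x + k) ^ (k - 1)


-- iterated forward difference of a low-degree monomial vanishes
lemma fd_pow_zero : ∀ n m : ℕ, m < n → (fwdDiff (1:ℚ))^[n] (fun t : ℚ => t ^ m) = 0 := by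
  intro n
  induction n with
  | zero => intro m hm; omega
  | succ n ih =>
    intro m hm
    rw [Function.iterate_succ_apply]
    have hΔ : fwdDiff (1:ℚ) (fun t : ℚ => t ^ m)
        = fun t : ℚ => ∑ j ∈ range m, (m.choose j : ℚ) * t ^ j := by
      funext t
      simp only [fwdDiff]
      rw [add_pow]
      rw [Finset.sum_range_succ]
      simp [mul_comm]
    rw [hΔ]
    have : (fun t : ℚ => ∑ j ∈ range m, (m.choose j : ℚ) * t ^ j)
        = ∑ j ∈ range m, fun t : ℚ => (m.choose j : ℚ) * t ^ j := by
      funext t; simp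
    rw [this, fwdDiff_iter_finset_sum]
    rw [show (0 : ℚ → ℚ) = ∑ j ∈ range m, (0 : ℚ → ℚ) by simp]
    refine Finset.sum_congr rfl fun j hj => ?_
    have : (fun t : ℚ => (m.choose j : ℚ) * t ^ j)
        = (m.choose j : ℚ) • (fun t : ℚ => t ^ j) := by
      funext t; simp
    rw [this, fwdDiff_iter_const_smul, ih j (by simp at hj; omega)]
    simp

-- alternating sum form
lemma alt_sum_zero (n m : ℕ) (hm : m < n) (x : ℚ) :
    ∑ j ∈ range (n + 1), (-1 : ℚ) ^ (n - j) * (n.choose j : ℚ) * (x + j) ^ m = 0 := by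
  have h := fwdDiff_iter_eq_sum_shift (1:ℚ) (fun t : ℚ => t ^ m) n x
  rw [fd_pow_zero n m hm] at h
  simp only [Pi.zero_apply] at h
  rw [h]
  refine Finset.sum_congr rfl fun j hj => ?_
  rw [zsmul_eq_mul]
  push_cast
  ring_nf



lemma choose_mul_sub (n k : ℕ) :
    (n + 1 - k) * ((n+1).choose k) = (n + 1) * n.choose k := by
  rcases le_or_gt k n with hk | hk
  · rw [mul_comm, ← Nat.choose_succ_right_eq, Nat.add_one_mul_choose_eq]
  · rcases Nat.eq_or_lt_of_le hk with rfl | hk'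
    · simp
    · rw [Nat.choose_eq_zero_of_lt (by omega), Nat.choose_eq_zero_of_lt (by omega)]
      simp

lemma abelPoly (n : ℕ) (x : ℚ) :
    ∑ k ∈ range (n + 1), C ((n.choose k : ℚ) * w x k) * (X + C ((n - k : ℕ) : ℚ)) ^ (n - k)
      = (X + C (x + n)) ^ n := by
  induction n with
  | zero => simp [w]
  | succ n ih =>
    have hderiv : derivative (∑ k ∈ range (n + 1 + 1),
        C (((n+1).choose k : ℚ) * w x k) * (X + C ((n + 1 - k : ℕ) : ℚ)) ^ (n + 1 - k))
        = derivative ((X + C (x + ((n:ℚ)+1))) ^ (n+1)) := by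
      rw [derivative_sum]
      have hD : ∀ k ∈ range (n + 1 + 1),
          derivative (C (((n+1).choose k : ℚ) * w x k) * (X + C ((n + 1 - k : ℕ) : ℚ)) ^ (n + 1 - k))
          = C ((((n+1) - k : ℕ) : ℚ) * (((n+1).choose k : ℚ) * w x k)) *
              (X + C ((n + 1 - k : ℕ) : ℚ)) ^ (n - k) := by
        intro k hk
        rw [mem_range] at hk
        rw [derivative_C_mul, derivative_pow, derivative_X_add_C, mul_one]
        have h1 : n + 1 - k - 1 = n - k := by omega
        rw [h1]
        simp only [C_mul]
        ring
      rw [Finset.sum_congr rfl hD, Finset.sum_range_succ]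
      have hlast : C ((((n+1) - (n+1) : ℕ) : ℚ) * (((n+1).choose (n+1) : ℚ) * w x (n+1))) *
          (X + C ((n + 1 - (n+1) : ℕ) : ℚ)) ^ (n - (n+1)) = 0 := by
        simp
      rw [hlast, add_zero]
      have hcomp := congrArg (fun p => p.comp (X + C (1:ℚ))) ih
      simp only [Polynomial.sum_comp, mul_comp, pow_comp, add_comp, X_comp, C_comp] at hcomp
      have hterm : ∀ k ∈ range (n + 1),
          C ((((n+1) - k : ℕ) : ℚ) * (((n+1).choose k : ℚ) * w x k)) *
              (X + C ((n + 1 - k : ℕ) : ℚ)) ^ (n - k)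
          = C (((n:ℚ)+1)) * (C ((n.choose k : ℚ) * w x k) *
              (X + C (1:ℚ) + C ((n - k : ℕ) : ℚ)) ^ (n - k)) := by
        intro k hk
        rw [mem_range] at hk
        have hch : (((n+1) - k : ℕ) : ℚ) * (((n+1).choose k : ℚ))
            = ((n:ℚ)+1) * (n.choose k : ℚ) := by
          have h2 := congrArg (fun m : ℕ => (m : ℚ)) (choose_mul_sub n k)
          push_cast at h2
          simpa using h2
        have hbase : ((n + 1 - k : ℕ) : ℚ) = 1 + ((n - k : ℕ) : ℚ) := by
          have h3 : n + 1 - k = (n - k) + 1 := by omega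
          rw [h3]; push_cast; ring
        have key : ((1:ℚ[X]) + C ((n - k : ℕ):ℚ)) * C (((n+1).choose k : ℚ))
            = (C ((n:ℚ)) + 1) * C ((n.choose k : ℚ)) := by
          rw [show (1:ℚ[X]) + C ((n - k : ℕ):ℚ) = C (1 + ((n - k : ℕ):ℚ)) by simp,
            show (C ((n:ℚ)) + (1:ℚ[X])) = C ((n:ℚ)+1) by simp, ← C_mul, ← C_mul, ← hbase, hch]
        rw [hbase]
        simp only [C_mul, C_add, C_1]
        linear_combination (C (w x k) * (X + 1 + C ((n - k : ℕ):ℚ)) ^ (n - k)) * key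
      rw [Finset.sum_congr rfl hterm, ← Finset.mul_sum, hcomp]
      rw [derivative_pow, derivative_X_add_C, mul_one]
      have h4 : (n + 1 : ℕ) - 1 = n := rfl
      rw [h4]
      have h5 : (X + C (1:ℚ) + C (x + (n:ℚ))) = X + C (x + ((n:ℚ)+1)) := by
        rw [add_assoc, ← C_add]
        congr 1
        ring
      rw [h5]
      push_cast
      ring
    -- now conclude from equal derivatives and equal value at a point
    have hsub := eq_C_of_derivative_eq_zero (p := (∑ k ∈ range (n + 1 + 1),
        C (((n+1).choose k : ℚ) * w x k) * (X + C ((n + 1 - k : ℕ) : ℚ)) ^ (n + 1 - k))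
        - (X + C (x + ((n:ℚ)+1))) ^ (n+1)) (by rw [derivative_sub, hderiv, sub_self])
    set a : ℚ := -(x + ((n:ℚ)+1)) with ha
    have hB : ((X + C (x + ((n:ℚ)+1))) ^ (n+1)).eval a = 0 := by
      have h0 : a + (x + ((n:ℚ)+1)) = 0 := by rw [ha]; ring
      rw [eval_pow, eval_add, eval_X, eval_C, h0, zero_pow (by omega)]
    have hA : (∑ k ∈ range (n + 1 + 1),
        C (((n+1).choose k : ℚ) * w x k) * (X + C ((n + 1 - k : ℕ) : ℚ)) ^ (n + 1 - k)).eval a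
        = 0 := by
      rw [eval_finset_sum]
      have hterm2 : ∀ k ∈ range (n + 1 + 1),
          (C (((n+1).choose k : ℚ) * w x k) * (X + C ((n + 1 - k : ℕ) : ℚ)) ^ (n + 1 - k)).eval a
          = x * ((-1:ℚ) ^ (n + 1 - k) * (((n+1).choose k : ℚ)) * (x + k) ^ n) := by
        intro k hk
        rw [mem_range] at hk
        rw [eval_mul, eval_C, eval_pow, eval_add, eval_X, eval_C]
        have hc : a + ((n + 1 - k : ℕ) : ℚ) = -(x + k) := by
          rw [ha, Nat.cast_sub (by omega)]
          push_cast
          ring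
        rw [hc, neg_pow]
        rcases Nat.eq_zero_or_pos k with rfl | hk1
        · simp only [w, if_pos rfl, Nat.cast_zero, add_zero]
          have hx : (x:ℚ) ^ (n + 1 - 0) = x ^ n * x := by rw [Nat.sub_zero, pow_succ]
          rw [hx]
          ring_nf
          simp
        · simp only [w, if_neg (Nat.pos_iff_ne_zero.mp hk1)]
          have hpow : (x + k) ^ (k-1) * (x + k) ^ (n + 1 - k) = (x + k) ^ n := by
            rw [← pow_add]
            congr 1
            omega
          calc (((n+1).choose k : ℚ)) * (x * (x + k) ^ (k-1)) * ((-1:ℚ)^(n+1-k) * (x + k) ^ (n+1-k))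
              = x * ((-1:ℚ) ^ (n + 1 - k) * (((n+1).choose k : ℚ)) * ((x + k) ^ (k-1) * (x + k) ^ (n + 1 - k))) := by ring
            _ = _ := by rw [hpow]
      rw [Finset.sum_congr rfl hterm2, ← Finset.mul_sum]
      rw [alt_sum_zero (n+1) n (by omega) x, mul_zero]
    have h6 := congrArg (fun p => p.eval a) hsub
    simp only [eval_sub, hA, hB, eval_C, sub_zero, zero_sub] at h6
    rw [← h6] at hsub
    have h7 : (∑ k ∈ range (n + 1 + 1),
        C (((n+1).choose k : ℚ) * w x k) * (X + C ((n + 1 - k : ℕ) : ℚ)) ^ (n + 1 - k))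
        - (X + C (x + ((n:ℚ)+1))) ^ (n+1) = 0 := by
      rw [hsub]; simp
    have := sub_eq_zero.mp h7
    convert this using 3 <;> push_cast <;> ring



lemma abelEval (n : ℕ) (x : ℚ) :
    ∑ k ∈ range (n + 1), (n.choose k : ℚ) * w x k * ((n - k : ℕ) : ℚ) ^ (n - k)
      = (x + n) ^ n := by
  have h := congrArg (fun p => p.eval 0) (abelPoly n x)
  simp only [eval_finset_sum, eval_mul, eval_pow, eval_add, eval_X, eval_C, zero_add] at h
  exact h

lemma lemF (n : ℕ) (hn : 1 ≤ n) :
    ∑ k ∈ range (n + 1),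
      (if k = 0 then 0 else (n.choose k : ℚ) * (k : ℚ) ^ (k - 1) * ((n - k : ℕ) : ℚ) ^ (n - k))
      = (n : ℚ) ^ n := by
  have hPQ : (∑ k ∈ range (n + 1), C ((n.choose k : ℚ) * ((n - k : ℕ) : ℚ) ^ (n - k)) *
        (if k = 0 then 1 else X * (X + C (k : ℚ)) ^ (k - 1)))
      = ((X + C (n : ℚ)) ^ n : ℚ[X]) := by
    apply Polynomial.funext
    intro x
    have h := abelEval n x
    simp only [eval_finset_sum, eval_mul, eval_pow, eval_add, eval_X, eval_C, apply_ite (eval x),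
      eval_one]
    rw [← h]
    refine Finset.sum_congr rfl fun k hk => ?_
    simp only [w]
    split_ifs with h0
    · ring
    · ring
  have h1 := congrArg (fun p => p.coeff 1) hPQ
  simp only [finset_sum_coeff, coeff_X_add_C_pow] at h1
  have h2 : ∑ b ∈ range (n + 1),
      (C ((n.choose b : ℚ) * ((n - b : ℕ) : ℚ) ^ (n - b)) *
        if b = 0 then 1 else X * (X + C (b : ℚ)) ^ (b - 1)).coeff 1
      = ∑ k ∈ range (n + 1),
      (if k = 0 then 0 else (n.choose k : ℚ) * (k : ℚ) ^ (k - 1) * ((n - k : ℕ) : ℚ) ^ (n - k)) := by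
    refine Finset.sum_congr rfl fun k hk => ?_
    split_ifs with h0
    · rw [mul_one, coeff_C]
      simp
    · rw [coeff_C_mul, coeff_X_mul, coeff_X_add_C_pow]
      simp only [Nat.choose_zero_right, Nat.cast_one, mul_one, Nat.sub_zero]
      ring
  rw [h2] at h1
  rw [h1, Nat.choose_one_right]
  have h3 : (n:ℚ)^n = (n:ℚ)^(n-1) * n := by
    rw [← pow_succ]
    congr 1
    omega
  rw [h3]



end PolyPart

section SeriesPart
open PowerSeries

noncomputable def t (m : ℕ) : ℚ := if m = 0 then 0 else (m : ℚ) ^ (m - 1) / m.factorial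

lemma lemE (n : ℕ) (hn : 1 ≤ n) :
    ∑ k ∈ range (n + 1), t k * ((n - k : ℕ) : ℚ) * t (n - k) = ((n : ℚ) - 1) * t n := by
  have hsplit := Finset.sum_range_succ
    (fun k => (if k = 0 then 0 else (n.choose k : ℚ) * (k : ℚ) ^ (k - 1) * ((n - k : ℕ) : ℚ) ^ (n - k))) n
  have hF := lemF n hn
  rw [hsplit] at hF
  -- last term
  have hlastF : (if n = 0 then 0 else (n.choose n : ℚ) * (n : ℚ) ^ (n - 1) * ((n - n : ℕ) : ℚ) ^ (n - n))
      = (n : ℚ) ^ (n - 1) := by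
    rw [if_neg (by omega)]
    simp
  rw [hlastF] at hF
  -- hF : ∑_{k < n} if ... = n^n - n^(n-1)
  have hF' : ∑ k ∈ range n,
      (if k = 0 then 0 else (n.choose k : ℚ) * (k : ℚ) ^ (k - 1) * ((n - k : ℕ) : ℚ) ^ (n - k))
      = (n:ℚ)^n - (n:ℚ)^(n-1) := by linarith
  -- now the target sum
  rw [Finset.sum_range_succ]
  have hlastT : t n * ((n - n : ℕ) : ℚ) * t (n - n) = 0 := by simp
  rw [hlastT, add_zero]
  have hterm : ∀ k ∈ range n,
      t k * ((n - k : ℕ) : ℚ) * t (n - k)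
      = (1 / n.factorial) * (if k = 0 then 0 else (n.choose k : ℚ) * (k : ℚ) ^ (k - 1) * ((n - k : ℕ) : ℚ) ^ (n - k)) := by
    intro k hk
    rw [mem_range] at hk
    rcases Nat.eq_zero_or_pos k with rfl | hk1
    · simp [t]
    · rw [if_neg (by omega)]
      simp only [t, if_neg (by omega : ¬ k = 0), if_neg (by omega : ¬ n - k = 0)]
      have hch : (n.choose k : ℚ) = (n.factorial : ℚ) / (k.factorial * (n - k).factorial) :=
        Nat.cast_choose ℚ (by omega)
      have hpow : ((n - k : ℕ) : ℚ) * ((n - k : ℕ) : ℚ) ^ (n - k - 1) = ((n - k : ℕ) : ℚ) ^ (n - k) := by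
        rw [← pow_succ']
        congr 1
        omega
      rw [hch, ← hpow]
      field_simp
  rw [Finset.sum_congr rfl hterm, ← Finset.mul_sum, hF']
  have hn' : (n:ℚ) ^ n = (n:ℚ)^(n-1) * n := by
    rw [← pow_succ]; congr 1; omega
  have hfac : ((n:ℕ).factorial : ℚ) ≠ 0 := by positivity
  simp only [t, if_neg (by omega : ¬ n = 0)]
  field_simp
  linear_combination hn'



noncomputable def T : ℚ⟦X⟧ := PowerSeries.mk t

lemma coeff_XdF (F : ℚ⟦X⟧) (n : ℕ) :
    (coeff n) (X * d⁄dX ℚ F) = n * (coeff n) F := by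
  cases n with
  | zero => simp
  | succ n =>
    rw [coeff_succ_X_mul, coeff_derivative]
    push_cast
    ring

lemma keyT : X * d⁄dX ℚ T = T + T * (X * d⁄dX ℚ T) := by
  ext n
  rw [map_add, coeff_XdF]
  cases n with
  | zero => simp [T, t]
  | succ n =>
    rw [coeff_mul]
    have hterm : ∀ p ∈ antidiagonal (n+1),
        (coeff p.1) T * (coeff p.2) (X * d⁄dX ℚ T) = t p.1 * (p.2 : ℚ) * t p.2 := by
      intro p hp
      rw [coeff_XdF]
      simp only [T, coeff_mk]
      ring
    rw [Finset.sum_congr rfl hterm]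
    rw [Finset.Nat.sum_antidiagonal_eq_sum_range_succ (f := fun a b => t a * (b : ℚ) * t b)]
    have := lemE (n+1) (by omega)
    simp only [T, coeff_mk]
    push_cast at this ⊢
    rw [this]
    ring

lemma XdTpow (j : ℕ) (hj : 1 ≤ j) :
    X * d⁄dX ℚ (T ^ j) = (j : ℕ) • (T ^ (j-1) * (X * d⁄dX ℚ T)) := by
  rw [Derivation.leibniz_pow, smul_eq_mul, mul_smul_comm]
  congr 1
  ring

lemma rec1 (n k : ℕ) (hk : 1 ≤ k) :
    (n : ℚ) * (coeff n) (T ^ (k+1)) * k = (k+1 : ℚ) * ((n : ℚ) - k) * (coeff n) (T ^ k) := by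
  have h1 : X * d⁄dX ℚ (T ^ (k+1)) = (k+1 : ℕ) • (T ^ k * (X * d⁄dX ℚ T)) := by
    simpa using XdTpow (k+1) (by omega)
  have hk' : T ^ (k-1) * T = T ^ k := by
    rw [← pow_succ]
    congr 1
    omega
  have h2 : X * d⁄dX ℚ (T ^ k) = (k : ℕ) • (T ^ k + T ^ k * (X * d⁄dX ℚ T)) := by
    rw [XdTpow k hk]
    congr 1
    conv_lhs => rw [keyT]
    rw [mul_add, show T ^ (k-1) * (T * (X * d⁄dX ℚ T)) = (T ^ (k-1) * T) * (X * d⁄dX ℚ T) by ring,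
      hk']
  have e1 := congrArg (coeff n) h1
  have e2 := congrArg (coeff n) h2
  rw [coeff_XdF, map_nsmul] at e1
  rw [coeff_XdF, map_nsmul, map_add] at e2
  rw [nsmul_eq_mul] at e1 e2
  push_cast at e1 e2
  linear_combination (k : ℚ) * e1 - ((k:ℚ)+1) * e2

lemma coeffTpow (n : ℕ) (hn : 1 ≤ n) :
    ∀ k, 1 ≤ k → k ≤ n →
      (coeff n) (T ^ k) = (k : ℚ) * (n : ℚ) ^ (n - k) / ((n : ℚ) * (n - k).factorial) := by
  intro k
  induction k with
  | zero => omega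
  | succ k ih =>
    intro _ hkn
    rcases Nat.eq_zero_or_pos k with rfl | hk1
    · simp only [pow_one, zero_add]
      have : (coeff n) T = t n := by simp [T]
      rw [this, t, if_neg (by omega)]
      have hfac : (n.factorial : ℚ) = (n : ℚ) * ((n-1).factorial : ℚ) := by
        rw_mod_cast [← Nat.mul_factorial_pred (by omega)]
      rw [hfac]
      push_cast
      ring
    · have hik := ih hk1 (by omega)
      have hr := rec1 n k hk1
      rw [hik] at hr
      have hn0 : (n:ℚ) ≠ 0 := by positivity
      have hk0 : (k:ℚ) ≠ 0 := by positivity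
      have hcast : ((n:ℚ) - k) = ((n - k : ℕ) : ℚ) := by
        rw [Nat.cast_sub (by omega)]
      have h9 : n - k = (n - (k+1)) + 1 := by omega
      have hfac2N : (n - k).factorial = (n - k) * (n - (k+1)).factorial := by
        rw [h9, Nat.factorial_succ]
      have hfac2 : ((n - k).factorial : ℚ) = ((n - k : ℕ) : ℚ) * ((n - (k+1)).factorial : ℚ) := by
        exact_mod_cast congrArg (fun m : ℕ => (m : ℚ)) hfac2N
      have hpow2 : (n:ℚ) ^ (n - k) = (n:ℚ) * (n:ℚ) ^ (n - (k+1)) := by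
        rw [h9, pow_succ]
        ring
      rw [hcast, hfac2, hpow2] at hr
      have hnk0 : ((n - k : ℕ) : ℚ) ≠ 0 := by
        have h10 : 0 < n - k := by omega
        positivity
      have hfacnk : ((n - (k+1)).factorial : ℚ) ≠ 0 := by positivity
      field_simp at hr
      have hr2 : (coeff n) (T ^ (k+1)) * ((n:ℚ) * ((n - (k+1)).factorial : ℚ))
            * ((k:ℚ) * (n:ℚ) * ((n - k : ℕ) : ℚ))
          = (((k:ℚ)+1) * (n:ℚ) ^ (n - (k+1)))
            * ((k:ℚ) * (n:ℚ) * ((n - k : ℕ) : ℚ)) := by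
        linear_combination ((k:ℚ) * (n:ℚ) * ((n - k : ℕ) : ℚ)) * hr
      have hr3 := mul_right_cancel₀ (by exact mul_ne_zero (mul_ne_zero hk0 hn0) hnk0) hr2
      rw [eq_div_iff (by exact mul_ne_zero hn0 hfacnk)]
      push_cast
      linear_combination hr3



lemma coeff_pow_tuple (k n : ℕ) :
    (coeff n) (T ^ k) = ∑ f ∈ Finset.Nat.antidiagonalTuple k n, ∏ i, t (f i) := by
  rw [PowerSeries.coeff_pow]
  refine Finset.sum_bij' (i := fun l _ => fun i : Fin k => l i)
    (j := fun f _ => Finsupp.onFinset (range k)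
      (fun i => if h : i < k then f ⟨i, h⟩ else 0) ?_) ?_ ?_ ?_ ?_ ?_
  · intro i hi
    rw [mem_range]
    by_contra hik
    simp only [dif_neg (by omega : ¬ i < k)] at hi
    exact hi rfl
  · intro l hl
    rw [Finset.mem_finsuppAntidiag] at hl
    rw [Finset.Nat.mem_antidiagonalTuple]
    show ∑ i : Fin k, l i = n
    rw [Fin.sum_univ_eq_sum_range (fun i => l i) k]
    exact hl.1
  · intro f hf
    rw [Finset.Nat.mem_antidiagonalTuple] at hf
    rw [Finset.mem_finsuppAntidiag]
    constructor
    · show ∑ i ∈ range k, (if h : i < k then f ⟨i, h⟩ else 0) = n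
      rw [← Fin.sum_univ_eq_sum_range (fun i => if h : i < k then f ⟨i, h⟩ else 0) k]
      rw [← hf]
      refine Finset.sum_congr rfl fun i _ => ?_
      rw [dif_pos i.isLt]
    · intro i hi
      exact Finsupp.support_onFinset_subset hi
  · intro l hl
    rw [Finset.mem_finsuppAntidiag] at hl
    ext i
    simp only [Finsupp.onFinset_apply]
    by_cases h : i < k
    · simp [h]
    · rw [dif_neg h]
      by_contra h0
      have := hl.2 (Finsupp.mem_support_iff.mpr (fun he => h0 he.symm))
      rw [mem_range] at this
      omega
  · intro f hf
    funext i
    simp only [Finsupp.onFinset_apply, dif_pos i.isLt]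
  · intro l hl
    show ∏ i ∈ range k, (coeff (l i)) T = ∏ i : Fin k, t (l i)
    simp only [T, coeff_mk]
    exact (Fin.prod_univ_eq_prod_range (fun i => t (l i)) k).symm



theorem stmt0 (n k : ℕ) (hn : 1 ≤ n) (hk1 : 1 ≤ k) (hkn : k ≤ n) :
    ∑ f ∈ (Finset.Nat.antidiagonalTuple k n).filter (fun f => ∀ i, 1 ≤ f i),
      (n.factorial : ℚ) / ((∏ i, ((f i).factorial : ℚ)) * k.factorial) *
        ∏ i, ((f i : ℚ) / n) ^ (f i - 1)
    = Nat.choose (n - 1) (k - 1) := by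
  have hn0 : (n : ℚ) ≠ 0 := by positivity
  have hk0 : (k : ℚ) ≠ 0 := by positivity
  have hnpow : (n : ℚ) ^ (n - k) ≠ 0 := by positivity
  have hkfac : (k.factorial : ℚ) ≠ 0 := by positivity
  set M : ℚ := (n.factorial : ℚ) / (k.factorial * (n : ℚ) ^ (n - k)) with hM
  have hfilter : ∑ f ∈ (Finset.Nat.antidiagonalTuple k n).filter (fun f => ∀ i, 1 ≤ f i),
      ∏ i, t (f i) = ∑ f ∈ Finset.Nat.antidiagonalTuple k n, ∏ i, t (f i) := by
    apply Finset.sum_filter_of_ne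
    intro f hf hprod
    intro i
    by_contra hi
    exact hprod (Finset.prod_eq_zero (mem_univ i) (by simp [t, show f i = 0 by omega]))
  have hterm : ∀ f ∈ (Finset.Nat.antidiagonalTuple k n).filter (fun f => ∀ i, 1 ≤ f i),
      (n.factorial : ℚ) / ((∏ i, ((f i).factorial : ℚ)) * k.factorial) *
        ∏ i, ((f i : ℚ) / n) ^ (f i - 1)
      = M * ∏ i, t (f i) := by
    intro f hf
    rw [Finset.mem_filter, Finset.Nat.mem_antidiagonalTuple] at hf
    obtain ⟨hsum, hpos⟩ := hf
    have hsub : ∑ i, (f i - 1) = n - k := by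
      have hfi : ∀ i : Fin k, f i - 1 + 1 = f i := fun i => by have := hpos i; omega
      have h1 : ∑ i : Fin k, ((f i - 1) + 1) = n := by
        simp only [hfi]
        exact hsum
      rw [Finset.sum_add_distrib, Finset.sum_const, card_univ, Fintype.card_fin,
        smul_eq_mul, mul_one] at h1
      omega
    have hprod1 : ∏ i, ((f i : ℚ) / n) ^ (f i - 1)
        = (∏ i, (f i : ℚ) ^ (f i - 1)) / (n : ℚ) ^ (n - k) := by
      rw [← hsub, ← Finset.prod_pow_eq_pow_sum, ← Finset.prod_div_distrib]
      exact Finset.prod_congr rfl fun i _ => div_pow _ _ _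
    have hprodt : ∏ i, t (f i) = (∏ i, (f i : ℚ) ^ (f i - 1)) / (∏ i, ((f i).factorial : ℚ)) := by
      rw [← Finset.prod_div_distrib]
      refine Finset.prod_congr rfl fun i _ => ?_
      rw [t, if_neg (by have := hpos i; omega)]
    rw [hprod1, hprodt, hM]
    have hff : (∏ i, ((f i).factorial : ℚ)) ≠ 0 := by
      apply Finset.prod_ne_zero_iff.mpr
      intro i _
      positivity
    rw [div_mul_div_comm, div_mul_div_comm]
    rw [div_eq_div_iff (by positivity) (by positivity)]
    ring
  rw [Finset.sum_congr rfl hterm, ← Finset.mul_sum, hfilter, ← coeff_pow_tuple,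
    coeffTpow n hn k hk1 hkn]
  have hch : ((n-1).choose (k-1) : ℚ)
      = ((n-1).factorial : ℚ) / ((k-1).factorial * ((n-1) - (k-1)).factorial) :=
    Nat.cast_choose ℚ (by omega)
  have hnk : (n-1) - (k-1) = n - k := by omega
  rw [hch, hnk, hM]
  have hnfac : (n.factorial : ℚ) = (n : ℚ) * ((n-1).factorial : ℚ) := by
    rw_mod_cast [Nat.mul_factorial_pred (by omega)]
  have hkfac2 : (k.factorial : ℚ) = (k : ℚ) * ((k-1).factorial : ℚ) := by
    rw_mod_cast [Nat.mul_factorial_pred (by omega)]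
  have h1 : ((k-1).factorial : ℚ) ≠ 0 := by positivity
  have h2 : ((n-1).factorial : ℚ) ≠ 0 := by positivity
  have h3 : ((n-k).factorial : ℚ) ≠ 0 := by positivity
  rw [hnfac, hkfac2]
  field_simp


end SeriesPart
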